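/- Let p be an odd prime dividing n, with p ∤ a, p ∤ b, p ∤ c. If the polynomial f(x) = x^n + a·x^{n−1} + b·x + c reduced mod p has a repeated root ζ in an algebraic closure of 𝔽_p, then ζ satisfies ζ² + 2āζ + ā·c̄·(b̄)^{−1} = 0 in that algebraic closure, where bars denote images in 𝔽_p. -/
import Mathlib

open Polynomial

theorem stmt_4 (n : ℕ) (hn : 4 < n) (a b c : ℤ) (p : ℕ) [hp : Fact p.Prime]
    (hodd : p ≠ 2) (hpn : p ∣ n)
    (hpa : ¬ (p : ℤ) ∣ a) (hpb : ¬ (p : ℤ) ∣ b) (hpc : ¬ (p : ℤ) ∣ c)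
    (f : (ZMod p)[X])
    (hf : f = X ^ n + C ((a : ZMod p)) * X ^ (n - 1) + C ((b : ZMod p)) * X + C ((c : ZMod p)))
    (ζ : AlgebraicClosure (ZMod p))
    (hroot : Polynomial.aeval ζ f = 0) (hroot' : Polynomial.aeval ζ (derivative f) = 0) :
    ζ ^ 2 + 2 * algebraMap (ZMod p) (AlgebraicClosure (ZMod p)) (a : ZMod p) * ζ
      + algebraMap (ZMod p) (AlgebraicClosure (ZMod p)) ((a : ZMod p) * (c : ZMod p) * (b : ZMod p)⁻¹)
      = 0 := by
  let A : ZMod p →+* AlgebraicClosure (ZMod p) := algebraMap (ZMod p) (AlgebraicClosure (ZMod p))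
  have hn0 : (n : ZMod p) = 0 := (ZMod.natCast_eq_zero_iff _ _).mpr hpn
  have ha : (a : ZMod p) ≠ 0 := fun h => hpa ((ZMod.intCast_zmod_eq_zero_iff_dvd _ _).mp h)
  have hb : (b : ZMod p) ≠ 0 := fun h => hpb ((ZMod.intCast_zmod_eq_zero_iff_dvd _ _).mp h)
  have hAb : A (b : ZMod p) ≠ 0 := fun h => hb (A.injective (by simpa using h))
  have hAa : A (a : ZMod p) ≠ 0 := fun h => ha (A.injective (by simpa using h))
  have hn1 : ((n - 1 : ℕ) : ZMod p) = -1 := by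
    have : ((n - 1 : ℕ) : ZMod p) = (n : ZMod p) - 1 := by
      push_cast [Nat.cast_sub (by omega : 1 ≤ n)]; ring
    rw [this, hn0]; ring
  subst hf
  simp only [derivative_add, derivative_mul, derivative_X_pow, derivative_C, derivative_X,
    zero_mul, add_zero, mul_one, map_add, map_mul, map_pow, aeval_X, aeval_C,
    aeval_natCast, zero_add] at hroot hroot'
  rw [hn0, hn1] at hroot'
  simp only [map_zero, map_neg, map_one, zero_mul, zero_add] at hroot'
  -- hroot' : A a * (-1 * ζ ^ (n - 1 - 1)) + A b = 0  (roughly)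
  have hsplit : ζ ^ n = ζ ^ 2 * ζ ^ (n - 2) := by rw [← pow_add]; congr 1; omega
  have hsplit' : ζ ^ (n - 1) = ζ * ζ ^ (n - 2) := by rw [← pow_succ']; congr 1; omega
  have hnn : n - 1 - 1 = n - 2 := by omega
  rw [hnn] at hroot'
  rw [hsplit, hsplit'] at hroot
  set t := ζ ^ (n - 2)
  have key : A (a : ZMod p) * t = A (b : ZMod p) := by linear_combination -hroot'
  have quad : A (b:ZMod p) * ζ^2 + 2 * A (a:ZMod p) * A (b:ZMod p) * ζ
      + A (a:ZMod p) * A (c:ZMod p) = 0 := by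
    linear_combination A (a:ZMod p) * hroot - (ζ^2 + A (a:ZMod p)*ζ) * key
  have hinv : A ((a : ZMod p) * (c : ZMod p) * (b : ZMod p)⁻¹)
      = A (a:ZMod p) * A (c:ZMod p) * (A (b:ZMod p))⁻¹ := by
    rw [map_mul, map_mul, map_inv₀]
  rw [hinv]
  have hAbinv : (A (b:ZMod p))⁻¹ * A (b:ZMod p) = 1 := inv_mul_cancel₀ hAb
  linear_combination (A (b:ZMod p))⁻¹ * quad - (ζ^2 + 2 * A (a:ZMod p) * ζ) * hAbinv
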